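/- For every f ∈ H^∞(B_{c₀}) and every u in the closed unit ball of ℓ_∞, the cluster sets coincide: Cl_{B_{c₀}}(f, u) = Cl_{𝔻_X}(f∘ι, u), where ι : X → c₀ is the map ι(x) = (e_j^*(x))_{j≥1} and f∘ι ∈ H^∞(𝔻_X). -/

import Mathlib

open Filter Topology Metric
open scoped ZeroAtInfty

noncomputable section

lemma c0_apply_norm_le (g : C₀(ℕ, ℂ)) (j : ℕ) : ‖g j‖ ≤ ‖g‖ := by
  rw [← ZeroAtInftyContinuousMap.norm_toBCF_eq_norm]
  exact BoundedContinuousFunction.norm_coe_le_norm g.toBCF j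

lemma c0_norm_le (g : C₀(ℕ, ℂ)) {C : ℝ} (hC : 0 ≤ C) (h : ∀ j, ‖g j‖ ≤ C) : ‖g‖ ≤ C := by
  rw [← ZeroAtInftyContinuousMap.norm_toBCF_eq_norm]
  exact (BoundedContinuousFunction.norm_le hC).mpr h

lemma c0_atTop (g : C₀(ℕ, ℂ)) : Tendsto g atTop (nhds 0) := by
  have := g.zero_at_infty'
  rwa [cocompact_eq_cofinite, Nat.cofinite_eq_atTop] at this

lemma c0_norm_lt_one (g : C₀(ℕ, ℂ)) (h : ∀ j, ‖g j‖ < 1) : ‖g‖ < 1 := by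
  have h2 : ∀ᶠ j in atTop, ‖g j‖ ≤ 1/2 := by
    have := (c0_atTop g)
    rw [Metric.tendsto_nhds] at this
    filter_upwards [this (1/2) (by norm_num)] with j hj
    simp only [dist_zero_right] at hj; linarith
  obtain ⟨N, hN⟩ := eventually_atTop.mp h2
  set r : ℝ := max ((Finset.range (N+1)).sup' (Finset.nonempty_range_add_one) (fun j => ‖g j‖)) (1/2) with hr
  have hrlt : r < 1 := by
    apply max_lt _ (by norm_num)
    rw [Finset.sup'_lt_iff]
    intro j _; exact h j
  refine lt_of_le_of_lt (c0_norm_le g (le_trans (by norm_num) (le_max_right _ _)) ?_) hrlt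
  intro j
  rcases le_or_gt N j with hj | hj
  · exact le_trans (hN j hj) (le_max_right _ _)
  · exact le_trans (Finset.le_sup' (f := fun j => ‖g j‖) (by simp; omega)) (le_max_left _ _)

/-- The diagonal filter on `ι₀ × ℕ`. -/
def diagF {ι₀ : Type} (l : Filter ι₀) : Filter (ι₀ × ℕ) :=
  l.bind (fun α => (atTop : Filter ℕ).map (fun n => (α, n)))

lemma diagF_neBot {ι₀ : Type} (l : Filter ι₀) (hl : l.NeBot) : (diagF l).NeBot := by
  rw [← Filter.forall_mem_nonempty_iff_neBot]
  intro s hs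
  rw [diagF, Filter.mem_bind] at hs
  obtain ⟨t, ht, hts⟩ := hs
  obtain ⟨α, hα⟩ := hl.nonempty_of_mem ht
  have := hts α hα
  rw [Filter.mem_map, Filter.mem_atTop_sets] at this
  obtain ⟨n, hn⟩ := this
  exact ⟨(α, n), hn n le_rfl⟩

lemma tendsto_diagF {ι₀ : Type} {l : Filter ι₀} (φ : ι₀ × ℕ → ℂ) (ψ : ι₀ → ℂ) (lam : ℂ)
    (h1 : ∀ α, Tendsto (fun n => φ (α, n)) atTop (nhds (ψ α)))
    (h2 : Tendsto ψ l (nhds lam)) :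
    Tendsto φ (diagF l) (nhds lam) := by
  rw [Metric.tendsto_nhds]
  intro ε hε
  rw [diagF, Filter.eventually_bind]
  filter_upwards [Metric.tendsto_nhds.mp h2 (ε/2) (by linarith)] with α hα
  rw [Filter.eventually_map]
  filter_upwards [Metric.tendsto_nhds.mp (h1 α) (ε/2) (by linarith)] with n hn
  calc dist (φ (α, n)) lam ≤ dist (φ (α, n)) (ψ α) + dist (ψ α) lam := dist_triangle _ _ _
    _ < ε/2 + ε/2 := add_lt_add hn hα
    _ = ε := by ring
structure SchauderBasis' (X : Type*) [NormedAddCommGroup X] [NormedSpace ℂ X] where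
  e : ℕ → X
  coord : ℕ → X →L[ℂ] ℂ
  norm_e : ∀ j, ‖e j‖ = 1
  coord_e : ∀ i j, coord i (e j) = if i = j then 1 else 0
  coord_bdd : ∃ C : ℝ, ∀ j, ‖coord j‖ ≤ C
  expand : ∀ x : X,
    Tendsto (fun n => ∑ j ∈ Finset.range n, coord j x • e j) atTop (nhds x)

def polydisk {X : Type*} [NormedAddCommGroup X] [NormedSpace ℂ X]
    (B : SchauderBasis' X) (r : ℕ → ℝ) : Set X :=
  {x | ∀ j, ‖B.coord j x‖ < r j}

/-- The cluster set `Cl_{B_{c₀}}(f, u)`: all limits of `f` along nets in the open unit ball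
of `c₀` converging weak-star (against `ℓ₁`) to `u ∈ ℓ_∞`. -/
def clusterSetC0 (f : C₀(ℕ, ℂ) → ℂ) (u : ℕ → ℂ) : Set ℂ :=
  {lam | ∃ (ι : Type) (l : Filter ι) (x : ι → C₀(ℕ, ℂ)), l.NeBot ∧
    (∀ i, x i ∈ ball (0 : C₀(ℕ, ℂ)) 1) ∧
    (∀ a : lp (fun _ : ℕ => ℂ) 1,
      Tendsto (fun i => ∑' j, a j * x i j) l (nhds (∑' j, a j * u j))) ∧
    Tendsto (fun i => f (x i)) l (nhds lam)}

/-- The cluster set `Cl_{𝔻_X}(g, u)`: all limits of `g` along nets in `𝔻_X` whose coordinate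
functionals converge weak-star (against `ℓ₁`) to `u ∈ ℓ_∞`. -/
def clusterSetDX {X : Type*} [NormedAddCommGroup X] [NormedSpace ℂ X]
    (B : SchauderBasis' X) (g : X → ℂ) (u : ℕ → ℂ) : Set ℂ :=
  {lam | ∃ (ι : Type) (l : Filter ι) (x : ι → X), l.NeBot ∧
    (∀ i, x i ∈ polydisk B (fun _ => 1)) ∧
    (∀ a : lp (fun _ : ℕ => ℂ) 1,
      Tendsto (fun i => ∑' j, a j * B.coord j (x i)) l (nhds (∑' j, a j * u j))) ∧
    Tendsto (fun i => g (x i)) l (nhds lam)}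

/-- for `f ∈ H^∞(B_{c₀})` and `u` in the closed unit ball of `ℓ_∞`,
`Cl_{B_{c₀}}(f, u) = Cl_{𝔻_X}(f ∘ ι, u)` where `ι(x) = (e_j^*(x))_j`. -/
theorem stmt8 {X : Type*} [NormedAddCommGroup X] [NormedSpace ℂ X] [CompleteSpace X]
    (B : SchauderBasis' X) (ι : X → C₀(ℕ, ℂ)) (hι : ∀ (x : X) (j : ℕ), ι x j = B.coord j x)
    (f : C₀(ℕ, ℂ) → ℂ) (hf : DifferentiableOn ℂ f (ball 0 1))
    (hfb : ∃ M : ℝ, ∀ z ∈ ball (0 : C₀(ℕ, ℂ)) 1, ‖f z‖ ≤ M)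
    (u : ℕ → ℂ) (hu : ∀ j, ‖u j‖ ≤ 1) :
    clusterSetC0 f u = clusterSetDX B (f ∘ ι) u := by
  ext lam
  constructor
  · rintro ⟨ι₀, l, z, hne, hmem, hw, hflim⟩
    have hzball : ∀ α, ‖z α‖ < 1 := fun α => mem_ball_zero_iff.mp (hmem α)
    set xf : ι₀ × ℕ → X := fun p => ∑ j ∈ Finset.range p.2, (z p.1) j • B.e j with hxf
    have coordx : ∀ α n i, B.coord i (xf (α, n)) = if i < n then z α i else 0 := by
      intro α n i
      simp only [hxf, map_sum, map_smul, B.coord_e, smul_eq_mul, mul_ite, mul_one, mul_zero,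
        Finset.sum_ite_eq, Finset.mem_range]
    have hιx : ∀ α n j, ι (xf (α, n)) j = if j < n then z α j else 0 := by
      intro α n j; rw [hι]; exact coordx α n j
    refine ⟨ι₀ × ℕ, diagF l, xf, diagF_neBot l hne, ?_, ?_, ?_⟩
    · intro p j
      rcases p with ⟨α, n⟩
      rw [coordx]
      split_ifs with h
      · exact lt_of_le_of_lt (c0_apply_norm_le (z α) j) (hzball α)
      · simpa using one_pos
    · intro a
      have ha : Summable (fun j => ‖a j‖) := by
        have := (lp.memℓp a).summable (p := 1) (by norm_num)
        simpa using this
      have hsum : ∀ α, Summable (fun j => a j * z α j) := by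
        intro α
        apply Summable.of_norm
        apply Summable.of_nonneg_of_le (fun j => norm_nonneg _) _ ha
        intro j
        rw [norm_mul]
        exact mul_le_of_le_one_right (norm_nonneg _)
          (le_of_lt (lt_of_le_of_lt (c0_apply_norm_le (z α) j) (hzball α)))
      apply tendsto_diagF _ (fun α => ∑' j, a j * z α j) _ _ (hw a)
      intro α
      have hteq : ∀ n, (∑' j, a j * B.coord j (xf (α, n))) = ∑ j ∈ Finset.range n, a j * z α j := by
        intro n
        rw [tsum_eq_sum (s := Finset.range n)]
        · exact Finset.sum_congr rfl fun j hj => by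
            rw [coordx, if_pos (Finset.mem_range.mp hj)]
        · intro j hj
          rw [coordx, if_neg (by simpa using hj), mul_zero]
      simp only [hteq]
      exact (hsum α).hasSum.tendsto_sum_nat
    · apply tendsto_diagF _ (fun α => f (z α)) _ _ hflim
      intro α
      have hcont : ContinuousAt f (z α) :=
        hf.continuousOn.continuousAt (isOpen_ball.mem_nhds (hmem α))
      have hconv : Tendsto (fun n => ι (xf (α, n))) atTop (nhds (z α)) := by
        rw [Metric.tendsto_atTop]
        intro ε hε
        have h2 : ∀ᶠ j in atTop, ‖z α j‖ ≤ ε/2 := by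
          filter_upwards [Metric.tendsto_nhds.mp (c0_atTop (z α)) (ε/2) (by linarith)] with j hj
          rw [dist_zero_right] at hj; linarith
        obtain ⟨N, hN⟩ := eventually_atTop.mp h2
        refine ⟨N, fun n hn => ?_⟩
        rw [dist_eq_norm]
        refine lt_of_le_of_lt (c0_norm_le _ (C := ε/2) (by linarith) ?_) (by linarith)
        intro j
        rw [ZeroAtInftyContinuousMap.sub_apply, hιx]
        split_ifs with h
        · simpa using le_of_lt (by linarith : (0:ℝ) < ε/2)
        · simpa using hN j (le_trans hn (not_lt.mp h))
      exact hcont.tendsto.comp hconv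
  · rintro ⟨ι₁, l, x, hne, hmem, hw, hflim⟩
    refine ⟨ι₁, l, fun i => ι (x i), hne, ?_, ?_, hflim⟩
    · intro i
      rw [mem_ball_zero_iff]
      apply c0_norm_lt_one
      intro j
      rw [hι]
      exact hmem i j
    · intro a
      simpa only [hι] using hw a
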